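/- Let C be a connected generalized Cartan matrix on a finite nonempty set I with an affine datum δ, and let v : I → ℝ be a configuration with Σ_i (δ i)·(v i) = 0. Then the set of configurations reachable from v is finite; that is, the numbers game from v loops, reaching only finitely many distinct configurations. -/

import Mathlib

/-- Firing vertex `i`: `v` is replaced by `fun j => v j - C i j * v i`. -/
def fire {I : Type*} (C : I → I → ℤ) (i : I) (v : I → ℝ) : I → ℝ :=
  fun j => v j - (C i j : ℝ) * v i

/-- The configuration resulting from firing the vertices in the list `l` successively. -/
def playResult {I : Type*} (C : I → I → ℤ) : (I → ℝ) → List I → (I → ℝ)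
  | v, [] => v
  | v, i :: l => playResult C (fire C i v) l

def dualStep {I : Type*} [Fintype I] [DecidableEq I] (C : I → I → ℤ) (i : I) (x : I → ℤ) : I → ℤ :=
  fun k => x k - (if k = i then ∑ j, C i j * x j else 0)

def dualWord {I : Type*} [Fintype I] [DecidableEq I] (C : I → I → ℤ) : List I → (I → ℤ) → (I → ℤ)
  | [], x => x
  | i :: p, x => dualStep C i (dualWord C p x)

lemma pairing_step {I : Type*} [Fintype I] [DecidableEq I] (C : I → I → ℤ) (i : I) (v : I → ℝ) (x : I → ℤ) :
    ∑ k, fire C i v k * (x k : ℝ) = ∑ k, v k * (dualStep C i x k : ℝ) := by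
  simp only [fire, dualStep]
  push_cast
  simp only [sub_mul, mul_sub, Finset.sum_sub_distrib]
  congr 1
  have h2 : ∑ k, v k * (if k = i then ∑ j, (C i j : ℝ) * (x j : ℝ) else 0)
      = v i * ∑ j, (C i j : ℝ) * (x j : ℝ) := by
    simp only [mul_ite, mul_zero]
    rw [Finset.sum_ite_eq' Finset.univ i (fun k => v k * ∑ j, (C i j : ℝ) * (x j : ℝ))]
    simp
  rw [h2, Finset.mul_sum]
  apply Finset.sum_congr rfl
  intro j _
  ring

lemma playResult_pairing {I : Type*} [Fintype I] [DecidableEq I] (C : I → I → ℤ) (p : List I) :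
    ∀ (v : I → ℝ) (x : I → ℤ),
    ∑ k, playResult C v p k * (x k : ℝ) = ∑ k, v k * (dualWord C p x k : ℝ) := by
  induction p with
  | nil => intro v x; rfl
  | cons i p ih =>
      intro v x
      show ∑ k, playResult C (fire C i v) p k * (x k : ℝ) = _
      rw [ih (fire C i v) x]
      exact pairing_step C i v (dualWord C p x)

lemma playResult_apply {I : Type*} [Fintype I] [DecidableEq I] (C : I → I → ℤ)
    (p : List I) (v : I → ℝ) (j : I) :
    playResult C v p j
      = ∑ k, v k * (dualWord C p (fun k => if k = j then 1 else 0) k : ℝ) := by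
  rw [← playResult_pairing C p v (fun k => if k = j then 1 else 0)]
  simp

def qf {I : Type*} [Fintype I] (B : I → I → ℝ) (y : I → ℝ) : ℝ :=
  ∑ i, ∑ j, B i j * y i * y j

section qflemmas
variable {I : Type*} [Fintype I] [DecidableEq I] (B : I → I → ℝ)

/-- changing one coordinate -/
lemma qf_sub_single (hsym : ∀ i j, B i j = B j i) (y : I → ℝ) (i : I) (t : ℝ) :
    qf B (fun k => y k - if k = i then t else 0)
      = qf B y - 2 * t * (∑ j, B i j * y j) + t ^ 2 * B i i := by
  unfold qf
  have expand : ∀ i' j : I,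
      B i' j * (y i' - if i' = i then t else 0) * (y j - if j = i then t else 0)
      = B i' j * y i' * y j
        - (if i' = i then t * (B i' j * y j) else 0)
        - (if j = i then t * (B i' j * y i') else 0)
        + (if i' = i then (if j = i then t ^ 2 * B i' j else 0) else 0) := by
    intro i' j
    by_cases h1 : i' = i <;> by_cases h2 : j = i <;> simp [h1, h2] <;> ring
  simp only [expand, Finset.sum_add_distrib, Finset.sum_sub_distrib]
  have h2 : ∑ i' : I, ∑ j : I, (if i' = i then t * (B i' j * y j) else 0)
      = t * ∑ j, B i j * y j := by
    have step : ∀ i' : I, ∑ j : I, (if i' = i then t * (B i' j * y j) else 0)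
        = if i' = i then t * ∑ j, B i' j * y j else 0 := by
      intro i'; split <;> simp [Finset.mul_sum]
    simp only [step]
    rw [Finset.sum_ite_eq' Finset.univ i (fun i' => t * ∑ j, B i' j * y j)]
    simp
  have h3 : ∑ i' : I, ∑ j : I, (if j = i then t * (B i' j * y i') else 0)
      = t * ∑ j, B i j * y j := by
    have step : ∀ i' : I, ∑ j : I, (if j = i then t * (B i' j * y i') else 0)
        = t * (B i' i * y i') := by
      intro i'
      rw [Finset.sum_ite_eq' Finset.univ i (fun j => t * (B i' j * y i'))]
      simp
    simp only [step]
    rw [Finset.mul_sum]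
    apply Finset.sum_congr rfl
    intro j _
    rw [hsym j i]
  have h4 : ∑ i' : I, ∑ j : I, (if i' = i then (if j = i then t ^ 2 * B i' j else 0) else 0)
      = t ^ 2 * B i i := by
    have step : ∀ i' : I, ∑ j : I, (if i' = i then (if j = i then t ^ 2 * B i' j else 0) else 0)
        = if i' = i then t ^ 2 * B i' i else 0 := by
      intro i'
      split
      · rw [Finset.sum_ite_eq' Finset.univ i (fun j => t ^ 2 * B i' j)]; simp
      · simp
    simp only [step]
    rw [Finset.sum_ite_eq' Finset.univ i (fun i' => t ^ 2 * B i' i)]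
    simp
  rw [h2, h3, h4]
  ring
end qflemmas

section qf2
variable {I : Type*} [Fintype I] (B : I → I → ℝ) (w : I → ℝ)

lemma qf_smul (c : ℝ) (y : I → ℝ) : qf B (fun k => c * y k) = c ^ 2 * qf B y := by
  unfold qf
  rw [Finset.mul_sum]
  apply Finset.sum_congr rfl
  intro i _
  rw [Finset.mul_sum]
  apply Finset.sum_congr rfl
  intro j _
  ring

lemma qf_sub_mul (hsym : ∀ i j, B i j = B j i) (hrow : ∀ i, ∑ j, B i j * w j = 0)
    (s : ℝ) (y : I → ℝ) : qf B (fun k => y k - s * w k) = qf B y := by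
  have hcol : ∀ j, ∑ i, B i j * w i = 0 := by
    intro j
    rw [← hrow j]
    exact Finset.sum_congr rfl (fun i _ => by rw [hsym i j])
  unfold qf
  have expand : ∀ i j : I,
      B i j * (y i - s * w i) * (y j - s * w j)
      = B i j * y i * y j - (B i j * w j) * (s * y i) - (B i j * w i) * (s * y j)
        + (B i j * w i) * (s ^ 2 * w j) := by
    intro i j; ring
  simp only [expand, Finset.sum_add_distrib, Finset.sum_sub_distrib]
  have h1 : ∑ i : I, ∑ j : I, (B i j * w j) * (s * y i) = 0 := by
    apply Finset.sum_eq_zero; intro i _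
    rw [← Finset.sum_mul, hrow i, zero_mul]
  have h2 : ∑ i : I, ∑ j : I, (B i j * w i) * (s * y j) = 0 := by
    rw [Finset.sum_comm]
    apply Finset.sum_eq_zero; intro j _
    rw [← Finset.sum_mul, hcol j, zero_mul]
  have h3 : ∑ i : I, ∑ j : I, (B i j * w i) * (s ^ 2 * w j) = 0 := by
    rw [Finset.sum_comm]
    apply Finset.sum_eq_zero; intro j _
    rw [← Finset.sum_mul, hcol j, zero_mul]
  rw [h1, h2, h3]
  ring

lemma qf_expand (hsym : ∀ i j, B i j = B j i) (hrow : ∀ i, ∑ j, B i j * w j = 0)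
    (z : I → ℝ) :
    ∑ i, ∑ j, (-B i j) * w i * w j * (z i - z j) ^ 2 = 2 * qf B (fun i => w i * z i) := by
  have hcol : ∀ j, ∑ i, B i j * w i = 0 := by
    intro j
    rw [← hrow j]
    exact Finset.sum_congr rfl (fun i _ => by rw [hsym i j])
  have expand : ∀ i j : I,
      (-B i j) * w i * w j * (z i - z j) ^ 2
      = (B i j * w j) * (-(w i * z i ^ 2)) + (B i j * w i) * (-(w j * z j ^ 2))
        + 2 * (B i j * (w i * z i) * (w j * z j)) := by
    intro i j; ring
  simp only [expand, Finset.sum_add_distrib]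
  have h1 : ∑ i : I, ∑ j : I, (B i j * w j) * (-(w i * z i ^ 2)) = 0 := by
    apply Finset.sum_eq_zero; intro i _
    rw [← Finset.sum_mul, hrow i, zero_mul]
  have h2 : ∑ i : I, ∑ j : I, (B i j * w i) * (-(w j * z j ^ 2)) = 0 := by
    rw [Finset.sum_comm]
    apply Finset.sum_eq_zero; intro j _
    rw [← Finset.sum_mul, hcol j, zero_mul]
  rw [h1, h2]
  unfold qf
  rw [Finset.mul_sum]
  have : ∀ i : I, ∑ j : I, 2 * (B i j * (w i * z i) * (w j * z j))
      = 2 * ∑ j : I, B i j * (w i * z i) * (w j * z j) := by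
    intro i; rw [Finset.mul_sum]
  simp only [this]
  simp [Finset.mul_sum]

lemma qf_nonneg (hsym : ∀ i j, B i j = B j i) (hrow : ∀ i, ∑ j, B i j * w j = 0)
    (hoffB : ∀ i j, i ≠ j → B i j ≤ 0) (hw : ∀ i, 0 < w i) (y : I → ℝ) :
    0 ≤ qf B y := by
  have hy : (fun i => w i * (y i / w i)) = y := by
    funext i; rw [mul_comm]; exact div_mul_cancel₀ _ (ne_of_gt (hw i))
  have hkey := qf_expand B w hsym hrow (fun i => y i / w i)
  rw [hy] at hkey
  have hterm : ∀ i j : I,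
      0 ≤ (-B i j) * w i * w j * ((y i / w i) - (y j / w j)) ^ 2 := by
    intro i j
    by_cases hij : i = j
    · subst hij; simp
    · apply mul_nonneg
      apply mul_nonneg
      apply mul_nonneg
      · linarith [hoffB i j hij]
      · exact (hw i).le
      · exact (hw j).le
      · positivity
  nlinarith [Finset.sum_nonneg (fun i (_ : i ∈ Finset.univ) =>
      Finset.sum_nonneg (fun j (_ : j ∈ Finset.univ) => hterm i j))]

lemma qf_zero_edge (hsym : ∀ i j, B i j = B j i) (hrow : ∀ i, ∑ j, B i j * w j = 0)
    (hoffB : ∀ i j, i ≠ j → B i j ≤ 0) (hw : ∀ i, 0 < w i) (y : I → ℝ)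
    (h0 : qf B y = 0) :
    ∀ i j, i ≠ j → B i j ≠ 0 → y i / w i = y j / w j := by
  have hy : (fun i => w i * (y i / w i)) = y := by
    funext i; rw [mul_comm]; exact div_mul_cancel₀ _ (ne_of_gt (hw i))
  have hkey := qf_expand B w hsym hrow (fun i => y i / w i)
  rw [hy, h0, mul_zero] at hkey
  have hterm : ∀ i j : I,
      0 ≤ (-B i j) * w i * w j * ((y i / w i) - (y j / w j)) ^ 2 := by
    intro i j
    by_cases hij : i = j
    · subst hij; simp
    · apply mul_nonneg
      apply mul_nonneg
      apply mul_nonneg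
      · linarith [hoffB i j hij]
      · exact (hw i).le
      · exact (hw j).le
      · positivity
  have houter := (Finset.sum_eq_zero_iff_of_nonneg
      (fun i (_ : i ∈ Finset.univ) => Finset.sum_nonneg
        (fun j (_ : j ∈ Finset.univ) => hterm i j))).mp hkey
  intro i j hij hB
  have hinner := (Finset.sum_eq_zero_iff_of_nonneg
      (fun j (_ : j ∈ Finset.univ) => hterm i j)).mp
      (houter i (Finset.mem_univ i)) j (Finset.mem_univ j)
  have hBneg : 0 < -B i j := by
    rcases lt_or_eq_of_le (hoffB i j hij) with h | h
    · linarith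
    · exact absurd h hB
  have hsq : ((y i / w i) - (y j / w j)) ^ 2 = 0 := by
    by_contra hne
    have hpos : 0 < ((y i / w i) - (y j / w j)) ^ 2 :=
      lt_of_le_of_ne (sq_nonneg _) (Ne.symm hne)
    have := mul_pos (mul_pos (mul_pos hBneg (hw i)) (hw j)) hpos
    linarith
  have := sq_eq_zero_iff.mp hsq
  linarith [this]
end qf2

lemma finite_int_sublevel {I : Type*} [Fintype I] [Nonempty I]
    (Q : (I → ℝ) → ℝ) (hcont : Continuous Q)
    (hhom : ∀ (c : ℝ) (y : I → ℝ), Q (fun k => c * y k) = c ^ 2 * Q y)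
    (hpos : ∀ y : I → ℝ, y ≠ 0 → 0 < Q y) (M : ℝ) :
    {x : I → ℤ | Q (fun k => (x k : ℝ)) ≤ M}.Finite := by
  have hsph : IsCompact (Metric.sphere (0 : I → ℝ) 1) := isCompact_sphere 0 1
  have hne : (Metric.sphere (0 : I → ℝ) 1).Nonempty := by
    refine ⟨fun _ => 1, ?_⟩
    simp [Metric.mem_sphere, dist_zero_right]
  obtain ⟨y₀, hy₀S, hmin'⟩ := hsph.exists_isMinOn hne hcont.continuousOn
  have hmin : ∀ u ∈ Metric.sphere (0 : I → ℝ) 1, Q y₀ ≤ Q u := fun u hu => hmin' hu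
  have hy₀ne : y₀ ≠ 0 := by
    intro h
    rw [Metric.mem_sphere, dist_zero_right, h, norm_zero] at hy₀S
    norm_num at hy₀S
  set ε := Q y₀ with hε
  have hεpos : 0 < ε := hpos y₀ hy₀ne
  -- bound on norms
  have hbound : ∀ y : I → ℝ, Q y ≤ M → ‖y‖ ^ 2 * ε ≤ max M 0 := by
    intro y hQ
    by_cases hy : y = 0
    · subst hy
      have h0 : ‖(0 : I → ℝ)‖ ^ 2 * ε = 0 := by simp
      rw [h0]
      exact le_max_right M 0
    · have hr : 0 < ‖y‖ := norm_pos_iff.mpr hy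
      set u := ‖y‖⁻¹ • y with hu
      have hun : u ∈ Metric.sphere (0 : I → ℝ) 1 := by
        rw [Metric.mem_sphere, dist_zero_right, hu, norm_smul]
        simp [abs_of_pos (inv_pos.mpr hr), inv_mul_cancel₀ (ne_of_gt hr)]
      have hQy : Q y = ‖y‖ ^ 2 * Q u := by
        have hyu : y = fun k => ‖y‖ * u k := by
          funext k
          rw [hu]
          simp only [Pi.smul_apply, smul_eq_mul]
          rw [← mul_assoc, mul_inv_cancel₀ (ne_of_gt hr), one_mul]
        conv_lhs => rw [hyu]
        exact hhom ‖y‖ u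
      have hQu : ε ≤ Q u := hmin u hun
      have : ‖y‖ ^ 2 * ε ≤ Q y := by
        rw [hQy]
        apply mul_le_mul_of_nonneg_left hQu (by positivity)
      calc ‖y‖ ^ 2 * ε ≤ Q y := this
        _ ≤ M := hQ
        _ ≤ max M 0 := le_max_left _ _
  set R := Real.sqrt (max M 0 / ε) with hR
  have hRnn : 0 ≤ R := Real.sqrt_nonneg _
  set N : ℤ := ⌈R⌉ with hN
  apply Set.Finite.subset (Set.Finite.pi (fun _ : I => Set.finite_Icc (-N) N))
  intro x hx
  have hQx : Q (fun k => (x k : ℝ)) ≤ M := hx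
  have hnb := hbound _ hQx
  have hnormle : ‖(fun k => (x k : ℝ))‖ ≤ R := by
    rw [hR]
    rw [show max M 0 / ε = (max M 0) / ε from rfl] at *
    have h1 : ‖(fun k => (x k : ℝ))‖ ^ 2 ≤ max M 0 / ε := by
      rw [le_div_iff₀ hεpos]
      exact hnb
    have := Real.sqrt_le_sqrt h1
    rwa [Real.sqrt_sq (norm_nonneg _)] at this
  intro k _
  have hk : |(x k : ℝ)| ≤ R := by
    have := norm_le_pi_norm (fun k => (x k : ℝ)) k
    simp only [Real.norm_eq_abs] at this
    linarith [hnormle, this]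
  have hkN : |(x k : ℝ)| ≤ (N : ℝ) := le_trans hk (Int.le_ceil R)
  rw [← Int.cast_abs] at hkN
  have : |x k| ≤ N := by exact_mod_cast hkN
  simp only [Set.mem_Icc]
  constructor
  · linarith [neg_abs_le (x k)]
  · linarith [le_abs_self (x k)]

open Finset

universe u

lemma symA : ∀ (n : ℕ) {I : Type u} [Fintype I] [DecidableEq I], Fintype.card I ≤ n →
    ∀ (C : I → I → ℤ) (δ : I → ℤ),
    (∀ i, C i i = 2) →
    (∀ i j, i ≠ j → C i j ≤ 0) →
    (∀ i j, C i j = 0 ↔ C j i = 0) →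
    (∀ i j, Relation.ReflTransGen (fun a b => a ≠ b ∧ C a b ≠ 0) i j) →
    (∀ i, 1 ≤ δ i) →
    (∀ i, 0 ≤ ∑ j, C i j * δ j) →
    ∃ d : I → ℝ, (∀ i, 0 < d i) ∧ ∀ i j, d i * (C i j : ℝ) = d j * (C j i : ℝ) := by
  intro n
  induction n with
  | zero =>
      intro I instF instD hcard C δ _ _ _ _ _ _
      have hE : IsEmpty I := by
        rw [← Fintype.card_eq_zero_iff]
        omega
      exact ⟨fun _ => 1, fun i => (hE.false i).elim, fun i j => (hE.false i).elim⟩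
  | succ n IH =>
      intro I instF instD hcard C δ hdiag hoff hzero hconn hδpos hδ
      by_cases hdeg : ∀ i : I, 2 ≤ (Finset.univ.filter (fun j => j ≠ i ∧ C i j ≠ 0)).card
      · -- every vertex has ≥ 2 neighbours : C is symmetric with all edge entries -1
        set N : I → Finset I := fun i => Finset.univ.filter (fun j => j ≠ i ∧ C i j ≠ 0) with hN
        have hmemN : ∀ i j : I, j ∈ N i ↔ (j ≠ i ∧ C i j ≠ 0) := by
          intro i j; simp [hN]
        -- row inequality
        have h1 : ∀ i : I, ∑ j ∈ N i, (-C i j) * δ j ≤ 2 * δ i := by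
          intro i
          have hsub : N i ⊆ Finset.univ.erase i := by
            intro j hj
            rw [Finset.mem_erase]
            exact ⟨((hmemN i j).mp hj).1, Finset.mem_univ j⟩
          have hrest : ∀ j ∈ Finset.univ.erase i, j ∉ N i → C i j * δ j = 0 := by
            intro j hj hnj
            rw [Finset.mem_erase] at hj
            have : C i j = 0 := by
              by_contra hC
              exact hnj ((hmemN i j).mpr ⟨hj.1, hC⟩)
            rw [this, zero_mul]
          have heq : ∑ j ∈ N i, C i j * δ j = ∑ j ∈ Finset.univ.erase i, C i j * δ j :=
            Finset.sum_subset hsub hrest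
          have hsplit : ∑ j ∈ Finset.univ.erase i, C i j * δ j + C i i * δ i
              = ∑ j : I, C i j * δ j := Finset.sum_erase_add _ _ (Finset.mem_univ i)
          have hneg : ∑ j ∈ N i, (-C i j) * δ j = -(∑ j ∈ N i, C i j * δ j) := by
            rw [← Finset.sum_neg_distrib]
            exact Finset.sum_congr rfl (fun j _ => by ring)
          have h0 := hδ i
          rw [hdiag i] at hsplit
          omega
        -- edge weights at least 1
        have h2 : ∀ i : I, ∑ j ∈ N i, δ j ≤ ∑ j ∈ N i, (-C i j) * δ j := by
          intro i
          apply Finset.sum_le_sum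
          intro j hj
          have hj' := (hmemN i j).mp hj
          have hCle : C i j ≤ -1 := by
            have := hoff i j (Ne.symm hj'.1)
            omega
          have hδj := hδpos j
          nlinarith
        -- column counting
        have h3 : ∑ i : I, ∑ j ∈ N i, δ j = ∑ j : I, ((N j).card : ℤ) * δ j := by
          have step1 : ∀ i : I, ∑ j ∈ N i, δ j
              = ∑ j : I, (if j ≠ i ∧ C i j ≠ 0 then δ j else 0) := by
            intro i
            rw [hN]
            exact Finset.sum_filter _ _
          simp only [step1]
          rw [Finset.sum_comm]
          apply Finset.sum_congr rfl
          intro j _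
          have hcond : ∀ i : I, (j ≠ i ∧ C i j ≠ 0) ↔ (i ≠ j ∧ C j i ≠ 0) := by
            intro i
            constructor
            · rintro ⟨h1', h2'⟩
              exact ⟨Ne.symm h1', fun h => h2' ((hzero j i).mp h)⟩
            · rintro ⟨h1', h2'⟩
              exact ⟨Ne.symm h1', fun h => h2' ((hzero i j).mp h)⟩
          have hcong : ∀ i : I, (if j ≠ i ∧ C i j ≠ 0 then δ j else 0)
              = (if i ≠ j ∧ C j i ≠ 0 then δ j else 0) := by
            intro i
            exact if_congr (hcond i) rfl rfl
          simp only [hcong]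
          rw [← Finset.sum_filter (fun i => i ≠ j ∧ C j i ≠ 0) (fun _ => δ j)]
          rw [Finset.sum_const, hN]
          simp [nsmul_eq_mul]
        -- combine
        have htot1 : ∑ i : I, ∑ j ∈ N i, δ j ≤ ∑ i : I, ∑ j ∈ N i, (-C i j) * δ j :=
          Finset.sum_le_sum (fun i _ => h2 i)
        have htot2 : ∑ i : I, ∑ j ∈ N i, (-C i j) * δ j ≤ ∑ i : I, 2 * δ i :=
          Finset.sum_le_sum (fun i _ => h1 i)
        have htot3 : ∑ i : I, 2 * δ i ≤ ∑ i : I, ∑ j ∈ N i, δ j := by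
          rw [h3]
          apply Finset.sum_le_sum
          intro j _
          have hc := hdeg j
          have hδj := hδpos j
          have : (2 : ℤ) ≤ ((N j).card : ℤ) := by exact_mod_cast hc
          nlinarith
        have hEq : ∑ i : I, ∑ j ∈ N i, δ j = ∑ i : I, ∑ j ∈ N i, (-C i j) * δ j := by
          omega
        have hper : ∀ i ∈ Finset.univ, (∑ j ∈ N i, δ j) = ∑ j ∈ N i, (-C i j) * δ j :=
          (Finset.sum_eq_sum_iff_of_le (fun i _ => h2 i)).mp hEq
        have hedge : ∀ i : I, ∀ j ∈ N i, C i j = -1 := by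
          intro i j hj
          have := (Finset.sum_eq_sum_iff_of_le (fun j hj => by
            have hj' := (hmemN i j).mp hj
            have hCle : C i j ≤ -1 := by
              have := hoff i j (Ne.symm hj'.1)
              omega
            have hδj := hδpos j
            nlinarith)).mp (hper i (Finset.mem_univ i)) j hj
          have hδj := hδpos j
          nlinarith
        have hCsym : ∀ i j : I, C i j = C j i := by
          intro i j
          by_cases hij : i = j
          · rw [hij]
          · by_cases hC : C i j = 0
            · rw [hC, ((hzero i j).mp hC)]
            · have hji : C j i ≠ 0 := fun h => hC ((hzero j i).mp h)
              have e1 := hedge i j ((hmemN i j).mpr ⟨Ne.symm hij, hC⟩)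
              have e2 := hedge j i ((hmemN j i).mpr ⟨hij, hji⟩)
              rw [e1, e2]
        exact ⟨fun _ => 1, fun _ => one_pos, fun i j => by rw [hCsym i j]⟩
      · -- there is a vertex with at most one neighbour
        push_neg at hdeg
        obtain ⟨ℓ, hℓ⟩ := hdeg
        have hcard1 : (Finset.univ.filter (fun j => j ≠ ℓ ∧ C ℓ j ≠ 0)).card ≤ 1 := by omega
        by_cases hedge : ∃ m, m ∈ Finset.univ.filter (fun j => j ≠ ℓ ∧ C ℓ j ≠ 0)
        · obtain ⟨m, hm⟩ := hedge
          have hm' : m ≠ ℓ ∧ C ℓ m ≠ 0 := by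
            rw [Finset.mem_filter] at hm
            exact hm.2
          have huniq : ∀ x, x ≠ ℓ → C ℓ x ≠ 0 → x = m := by
            intro x hx1 hx2
            exact Finset.card_le_one.mp hcard1 x
              (Finset.mem_filter.mpr ⟨Finset.mem_univ x, hx1, hx2⟩) m hm
          -- pass to the subtype without ℓ
          have hcard' : Fintype.card {x : I // x ≠ ℓ} ≤ n := by
            have h1 : Fintype.card {x : I // x = ℓ} = 1 := Fintype.card_subtype_eq ℓ
            have h2 := Fintype.card_subtype_compl (fun x : I => x = ℓ)
            have h3 : 1 ≤ Fintype.card I := Fintype.card_pos_iff.mpr ⟨ℓ⟩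
            rw [h1] at h2
            calc Fintype.card {x : I // x ≠ ℓ} = Fintype.card I - 1 := h2
              _ ≤ n := by omega
          set C' : {x : I // x ≠ ℓ} → {x : I // x ≠ ℓ} → ℤ := fun a b => C a.1 b.1 with hC'
          set δ' : {x : I // x ≠ ℓ} → ℤ := fun a => δ a.1 with hδ'def
          have hδ'sum : ∀ i : {x : I // x ≠ ℓ}, 0 ≤ ∑ j, C' i j * δ' j := by
            intro i
            have hsubty : ∑ j ∈ Finset.univ.erase ℓ, C i.1 j * δ j
                = ∑ j : {x : I // x ≠ ℓ}, C i.1 j.1 * δ j.1 :=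
              Finset.sum_subtype (p := fun x : I => x ≠ ℓ) (Finset.univ.erase ℓ)
                (fun x => by simp [Finset.mem_erase]) (fun j => C i.1 j * δ j)
            have hsplit : ∑ j ∈ Finset.univ.erase ℓ, C i.1 j * δ j + C i.1 ℓ * δ ℓ
                = ∑ j : I, C i.1 j * δ j := Finset.sum_erase_add _ _ (Finset.mem_univ ℓ)
            have h0 := hδ i.1
            have hCneg : C i.1 ℓ ≤ 0 := hoff i.1 ℓ i.2
            have hδℓ := hδpos ℓ
            have : C i.1 ℓ * δ ℓ ≤ 0 := by nlinarith
            show (0 : ℤ) ≤ ∑ j : {x : I // x ≠ ℓ}, C i.1 j.1 * δ j.1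
            omega
          -- connectivity of the reduced graph
          set f : I → {x : I // x ≠ ℓ} := fun x => if h : x = ℓ then ⟨m, hm'.1⟩ else ⟨x, h⟩ with hf
          have hstep : ∀ a b : I, (a ≠ b ∧ C a b ≠ 0) →
              Relation.ReflTransGen (fun a b : {x : I // x ≠ ℓ} => a ≠ b ∧ C' a b ≠ 0) (f a) (f b) := by
            intro a b hab
            by_cases ha : a = ℓ
            · have hb : b = m := huniq b (fun h => hab.1 (ha.trans h.symm)) (by rw [← ha]; exact hab.2)
              have hbne : b ≠ ℓ := fun h => hab.1 (ha.trans h.symm)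
              have hfa : f a = ⟨m, hm'.1⟩ := by rw [hf]; simp only [dif_pos ha]
              have hfb : f b = ⟨m, hm'.1⟩ := by
                rw [hf]; simp only [dif_neg hbne]; exact Subtype.ext hb
              rw [hfa, hfb]
            · by_cases hb : b = ℓ
              · have hCla : C ℓ a ≠ 0 := by
                  intro h
                  exact hab.2 (by rw [hb]; exact (hzero ℓ a).mp h)
                have ha' : a = m := huniq a ha hCla
                have hfa : f a = ⟨m, hm'.1⟩ := by
                  rw [hf]; simp only [dif_neg ha]; exact Subtype.ext ha'
                have hfb : f b = ⟨m, hm'.1⟩ := by rw [hf]; simp only [dif_pos hb]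
                rw [hfa, hfb]
              · have hfa : f a = ⟨a, ha⟩ := by rw [hf]; simp only [dif_neg ha]
                have hfb : f b = ⟨b, hb⟩ := by rw [hf]; simp only [dif_neg hb]
                rw [hfa, hfb]
                apply Relation.ReflTransGen.single
                exact ⟨fun h => hab.1 (congrArg Subtype.val h), hab.2⟩
          have hconn' : ∀ i j : {x : I // x ≠ ℓ},
              Relation.ReflTransGen (fun a b : {x : I // x ≠ ℓ} => a ≠ b ∧ C' a b ≠ 0) i j := by
            intro i j
            have hlift : ∀ a b : I, Relation.ReflTransGen (fun a b => a ≠ b ∧ C a b ≠ 0) a b →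
                Relation.ReflTransGen (fun a b : {x : I // x ≠ ℓ} => a ≠ b ∧ C' a b ≠ 0)
                  (f a) (f b) := by
              intro a b h
              induction h with
              | refl => exact Relation.ReflTransGen.refl
              | tail _ h2 ih => exact ih.trans (hstep _ _ h2)
            have := hlift i.1 j.1 (hconn i.1 j.1)
            have hfi : f i.1 = i := by rw [hf]; simp only [dif_neg i.2]
            have hfj : f j.1 = j := by rw [hf]; simp only [dif_neg j.2]
            rwa [hfi, hfj] at this
          obtain ⟨d', hd'pos, hd'sym⟩ := IH hcard' C' δ'
            (fun i => hdiag i.1)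
            (fun i j hij => hoff i.1 j.1 (fun h => hij (Subtype.ext h)))
            (fun i j => hzero i.1 j.1)
            hconn'
            (fun i => hδpos i.1)
            hδ'sum
          -- extend d' to I
          have hCmℓ : C m ℓ ≠ 0 := fun h => hm'.2 ((hzero m ℓ).mp h)
          have hCmℓneg : (C m ℓ : ℝ) < 0 := by
            have h1 : C m ℓ ≤ 0 := hoff m ℓ hm'.1
            have : C m ℓ < 0 := lt_of_le_of_ne h1 hCmℓ
            exact_mod_cast this
          have hCℓmneg : (C ℓ m : ℝ) < 0 := by
            have h1 : C ℓ m ≤ 0 := hoff ℓ m (Ne.symm hm'.1)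
            have : C ℓ m < 0 := lt_of_le_of_ne h1 hm'.2
            exact_mod_cast this
          have hCℓmne : (C ℓ m : ℝ) ≠ 0 := ne_of_lt hCℓmneg
          refine ⟨fun x => if h : x = ℓ then d' ⟨m, hm'.1⟩ * ((C m ℓ : ℝ) / (C ℓ m : ℝ))
            else d' ⟨x, h⟩, ?_, ?_⟩
          · intro i
            dsimp only
            by_cases hi : i = ℓ
            · rw [dif_pos hi]
              apply mul_pos (hd'pos _)
              exact div_pos_iff.mpr (Or.inr ⟨hCmℓneg, hCℓmneg⟩)
            · rw [dif_neg hi]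
              exact hd'pos _
          · intro i j
            dsimp only
            by_cases hi : i = ℓ <;> by_cases hj : j = ℓ
            · rw [hi, hj]
            · rw [dif_pos hi, dif_neg hj, hi]
              by_cases hC : C ℓ j = 0
              · rw [hC, ((hzero ℓ j).mp hC)]
                simp
              · have hjm : j = m := huniq j hj hC
                subst hjm
                rw [mul_assoc, div_mul_cancel₀ _ hCℓmne]
            · rw [dif_neg hi, dif_pos hj, hj]
              by_cases hC : C i ℓ = 0
              · rw [hC, ((hzero i ℓ).mp hC)]
                simp
              · have hCℓi : C ℓ i ≠ 0 := fun h => hC ((hzero ℓ i).mp h)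
                have him : i = m := huniq i hi hCℓi
                subst him
                rw [mul_assoc, div_mul_cancel₀ _ hCℓmne]
            · rw [dif_neg hi, dif_neg hj]
              exact hd'sym ⟨i, hi⟩ ⟨j, hj⟩
        · -- no neighbour : the type is a single point
          have hall : ∀ j : I, j = ℓ := by
            intro j
            by_contra hj
            rcases Relation.ReflTransGen.cases_head (hconn ℓ j) with h | ⟨c, hc, _⟩
            · exact hj h.symm
            · exact hedge ⟨c, Finset.mem_filter.mpr ⟨Finset.mem_univ c, Ne.symm hc.1, hc.2⟩⟩
          refine ⟨fun _ => 1, fun _ => one_pos, ?_⟩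
          intro i j
          rw [hall i, hall j]

/-- `IsPlay C θ v l` : the list `l` is a sequence of successive firings starting at `v`
in which each fired vertex has amplitude strictly less than `θ` at the time it is fired.
With `θ = 0` this is a legal play; with `θ = -1` a `(<-1)`-play. -/
def IsPlay {I : Type*} (C : I → I → ℤ) (θ : ℝ) : (I → ℝ) → List I → Prop
  | _, [] => True
  | v, i :: l => v i < θ ∧ IsPlay C θ (fire C i v) l

/-- In the affine case with `δ · v = 0`, the numbers game from `v` loops: the set of
configurations reachable from `v` by legal plays is finite. -/
theorem numbers_game_loops_of_zero_pairing
    {I : Type*} [Fintype I] [Nonempty I] (C : I → I → ℤ)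
    (hdiag : ∀ i, C i i = 2)
    (hoff : ∀ i j, i ≠ j → C i j ≤ 0)
    (hzero : ∀ i j, C i j = 0 ↔ C j i = 0)
    (hconn : ∀ i j : I, Relation.ReflTransGen (fun a b => a ≠ b ∧ C a b ≠ 0) i j)
    (δ : I → ℤ) (hδpos : ∀ i, 1 ≤ δ i)
    (hδ : ∀ i, ∑ j : I, C i j * δ j = 0)
    (v : I → ℝ) (hv : ∑ i : I, (δ i : ℝ) * v i = 0) :
    {u : I → ℝ | ∃ p : List I, IsPlay C 0 v p ∧ playResult C v p = u}.Finite := by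
  classical
  obtain ⟨d, hdpos, hdsym⟩ := symA (Fintype.card I) (le_refl _) C δ hdiag hoff hzero hconn
    hδpos (fun i => le_of_eq (hδ i).symm)
  set δr : I → ℝ := fun i => (δ i : ℝ) with hδr
  have hδrpos : ∀ i, 0 < δr i := by
    intro i
    have h := hδpos i
    show (0 : ℝ) < ((δ i : ℤ) : ℝ)
    exact_mod_cast lt_of_lt_of_le zero_lt_one h
  set B : I → I → ℝ := fun i j => d i * (C i j : ℝ) with hBdef
  have hBsym : ∀ i j, B i j = B j i := fun i j => hdsym i j
  have hBrow : ∀ i, ∑ j, B i j * δr j = 0 := by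
    intro i
    have h1 : ∑ j, B i j * δr j = d i * ((∑ j, C i j * δ j : ℤ) : ℝ) := by
      push_cast
      rw [Finset.mul_sum]
      exact Finset.sum_congr rfl (fun j _ => by rw [hBdef, hδr]; ring)
    rw [h1, hδ i]
    simp
  have hBoff : ∀ i j, i ≠ j → B i j ≤ 0 := by
    intro i j hij
    show d i * (C i j : ℝ) ≤ 0
    have h1 : (C i j : ℝ) ≤ 0 := by exact_mod_cast hoff i j hij
    have h2 := mul_le_mul_of_nonneg_left h1 (hdpos i).le
    simpa using h2
  -- invariance of the quadratic form under dual steps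
  have hstepQ : ∀ (i : I) (x : I → ℤ),
      qf B (fun k => (dualStep C i x k : ℝ)) = qf B (fun k => (x k : ℝ)) := by
    intro i x
    have hcast : (fun k => (dualStep C i x k : ℝ))
        = fun k => (x k : ℝ) - (if k = i then ∑ j, (C i j : ℝ) * (x j : ℝ) else 0) := by
      funext k
      simp only [dualStep]
      push_cast [apply_ite (fun z : ℤ => (z : ℝ))]
      ring
    rw [hcast, qf_sub_single B hBsym]
    have h1 : ∑ j, B i j * (x j : ℝ) = d i * ∑ j, (C i j : ℝ) * (x j : ℝ) := by
      rw [Finset.mul_sum]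
      exact Finset.sum_congr rfl (fun j _ => by rw [hBdef]; ring)
    have h2 : B i i = d i * 2 := by
      show d i * ((C i i : ℤ) : ℝ) = d i * 2
      rw [hdiag i]
      norm_num
    rw [h1, h2]
    ring
  have hwordQ : ∀ (p : List I) (x : I → ℤ),
      qf B (fun k => (dualWord C p x k : ℝ)) = qf B (fun k => (x k : ℝ)) := by
    intro p
    induction p with
    | nil => intro x; rfl
    | cons i p ih =>
        intro x
        show qf B (fun k => (dualStep C i (dualWord C p x) k : ℝ)) = _
        rw [hstepQ]
        exact ih x
  obtain ⟨i₀⟩ := ‹Nonempty I›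
  set Q2 : (I → ℝ) → ℝ := fun y => qf B y + (y i₀) ^ 2 with hQ2def
  have hqcont : Continuous (qf B) := by
    unfold qf
    apply continuous_finset_sum
    intro i _
    apply continuous_finset_sum
    intro j _
    exact (continuous_const.mul (continuous_apply i)).mul (continuous_apply j)
  have hcont : Continuous Q2 := by
    rw [hQ2def]
    exact hqcont.add ((continuous_apply i₀).pow 2)
  have hhom : ∀ (c : ℝ) (y : I → ℝ), Q2 (fun k => c * y k) = c ^ 2 * Q2 y := by
    intro c y
    rw [hQ2def]
    dsimp only
    rw [qf_smul]
    ring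
  have hqnonneg : ∀ y, 0 ≤ qf B y := qf_nonneg B δr hBsym hBrow hBoff hδrpos
  have hpos : ∀ y : I → ℝ, y ≠ 0 → 0 < Q2 y := by
    intro y hy
    have h0 : 0 ≤ Q2 y := add_nonneg (hqnonneg y) (sq_nonneg _)
    rcases lt_or_eq_of_le h0 with h | h
    · exact h
    · exfalso
      have hQ2y : Q2 y = qf B y + (y i₀) ^ 2 := rfl
      have hq0 : qf B y = 0 := by nlinarith [sq_nonneg (y i₀), hqnonneg y, hQ2y]
      have hyi0 : y i₀ = 0 := by
        have hsq0 : (y i₀) ^ 2 = 0 := by nlinarith [hqnonneg y, hQ2y]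
        exact (pow_eq_zero_iff (by norm_num : (2:ℕ) ≠ 0)).mp hsq0
      have hedge := qf_zero_edge B δr hBsym hBrow hBoff hδrpos y hq0
      have hrtg : ∀ a b : I, Relation.ReflTransGen (fun a b => a ≠ b ∧ C a b ≠ 0) a b →
          y a / δr a = y b / δr b := by
        intro a b h
        induction h with
        | refl => rfl
        | tail _ h2 ih =>
            rw [ih]
            apply hedge _ _ h2.1
            rw [hBdef]
            apply mul_ne_zero (ne_of_gt (hdpos _))
            exact_mod_cast h2.2
      apply hy
      funext k
      have := hrtg k i₀ (hconn k i₀)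
      rw [hyi0] at this
      have h2 : y k / δr k = 0 := by
        rw [this, zero_div]
      have h3 := hδrpos k
      field_simp at h2
      simpa using h2
  set M : ℝ := (∑ j, qf B (fun k => if k = j then (1 : ℝ) else 0)) + (δr i₀) ^ 2 with hM
  have hSfin : {x : I → ℤ | Q2 (fun k => (x k : ℝ)) ≤ M}.Finite :=
    finite_int_sublevel Q2 hcont hhom hpos M
  set ψ : (I → ℤ) → ℝ := fun x => ∑ k, v k * (x k : ℝ) with hψ
  have hAfin : (ψ '' {x : I → ℤ | Q2 (fun k => (x k : ℝ)) ≤ M}).Finite := hSfin.image ψ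
  apply Set.Finite.subset (Set.Finite.pi (fun _ : I => hAfin))
  intro u hu
  obtain ⟨p, _, hup⟩ := hu
  intro j _
  -- the integer vector describing coordinate j of the result
  set x : I → ℤ := dualWord C p (fun k => if k = j then 1 else 0) with hx
  set t : ℤ := x i₀ / δ i₀ with ht
  set x' : I → ℤ := fun k => x k - t * δ k with hx'
  have hmod : x' i₀ = x i₀ % δ i₀ := by
    rw [hx']
    dsimp only
    rw [Int.emod_def]
    ring_nf
    rw [ht]; ring
  have hδi₀pos : (0 : ℤ) < δ i₀ := lt_of_lt_of_le zero_lt_one (hδpos i₀)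
  have hx'lb : 0 ≤ x' i₀ := by
    rw [hmod]
    exact Int.emod_nonneg _ (ne_of_gt hδi₀pos)
  have hx'ub : x' i₀ < δ i₀ := by
    rw [hmod]
    exact Int.emod_lt_of_pos _ hδi₀pos
  refine ⟨x', ?_, ?_⟩
  · -- membership in the sublevel set
    show Q2 (fun k => (x' k : ℝ)) ≤ M
    have hcast : (fun k => (x' k : ℝ)) = fun k => (x k : ℝ) - (t : ℝ) * δr k := by
      funext k
      rw [hx']
      push_cast
      rw [hδr]
    have hq1 : qf B (fun k => (x' k : ℝ)) = qf B (fun k => (x k : ℝ)) := by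
      rw [hcast]
      exact qf_sub_mul B δr hBsym hBrow (t : ℝ) _
    have hq2 : qf B (fun k => (x k : ℝ))
        = qf B (fun k => if k = j then (1 : ℝ) else 0) := by
      rw [hx, hwordQ p _]
      congr 1
      funext k
      split <;> simp
    have hq4 : qf B (fun k => if k = j then (1 : ℝ) else 0)
        ≤ ∑ j', qf B (fun k => if k = j' then (1 : ℝ) else 0) :=
      Finset.single_le_sum (f := fun j' => qf B (fun k => if k = j' then (1 : ℝ) else 0))
        (fun j' _ => hqnonneg _) (Finset.mem_univ j)
    have hsq : ((x' i₀ : ℝ)) ^ 2 ≤ (δr i₀) ^ 2 := by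
      have h1 : (0 : ℝ) ≤ (x' i₀ : ℝ) := by exact_mod_cast hx'lb
      have h2 : (x' i₀ : ℝ) ≤ δr i₀ := by
        show ((x' i₀ : ℤ) : ℝ) ≤ ((δ i₀ : ℤ) : ℝ)
        exact_mod_cast le_of_lt hx'ub
      nlinarith
    rw [hQ2def]
    dsimp only
    rw [hq1, hq2]
    rw [hM]
    linarith
  · -- the value equals u j
    show ψ x' = u j
    have hsum : ψ x' = ψ x - (t : ℝ) * ∑ k, (δ k : ℝ) * v k := by
      rw [hψ, hx']
      dsimp only
      push_cast
      rw [Finset.mul_sum, ← Finset.sum_sub_distrib]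
      exact Finset.sum_congr rfl (fun k _ => by ring)
    rw [hsum, hv, mul_zero, sub_zero]
    rw [← hup]
    exact (playResult_apply C p v j).symm
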